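/- For all real parameters a > 0, b > 1, T > 0, one has limsup_{χ→+∞} (1/χ)·∫_0^χ N_{a,b,T}(τ) dτ ≥ 2a(b − 1)/(π(b + 1)) > 0 and liminf_{χ→+∞} (1/χ)·∫_0^χ N_{a,b,T}(τ) dτ ≤ −2a(b − 1)/(π(b + 1)) < 0; in particular the limsup of the averaged integral is strictly positive and its liminf strictly negative. -/

import Mathlib

open Real Filter Set

/-- Breakpoints `s_n(b,T) = T·π·(b^n − 1)/(b − 1)`. -/
noncomputable def brk (b T : ℝ) (n : ℕ) : ℝ := T * Real.pi * (b ^ n - 1) / (b - 1)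

/-- Index of the segment containing `x ≥ 0`: the unique `m` with `s_m ≤ x < s_{m+1}`
(for `b > 1`, `T > 0`). -/
noncomputable def seg (b T x : ℝ) : ℕ := sInf {n : ℕ | x < brk b T (n + 1)}

/-- The saturated Nussbaum function `N_{a,b,T}`: on `[s_{n−1}, s_n)` (with `m = n − 1`)
it equals `(−1)^m·a·cos((χ − s_m)/(b^m·T))`, extended evenly to `χ < 0`. -/
noncomputable def satN (a b T : ℝ) (χ : ℝ) : ℝ :=
  (-1 : ℝ) ^ (seg b T |χ|) * a *
    Real.cos ((|χ| - brk b T (seg b T |χ|)) / (b ^ (seg b T |χ|) * T))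

/-- The integrated function `G_{a,b,T}(χ) = ∫_0^χ N_{a,b,T}(τ) dτ`. -/
noncomputable def satG (a b T : ℝ) (χ : ℝ) : ℝ := ∫ τ in (0:ℝ)..χ, satN a b T τ

section lems

variable {a b T : ℝ}

lemma brk_zero : brk b T 0 = 0 := by simp [brk]

lemma brk_strictMono (hb : 1 < b) (hT : 0 < T) : StrictMono (brk b T) := by
  intro n m h
  have h1 : b ^ n < b ^ m := pow_lt_pow_right₀ hb h
  have hπ := Real.pi_pos
  unfold brk
  have hb1 : (0:ℝ) < b - 1 := by linarith
  have hTπ : (0:ℝ) < T * Real.pi := by positivity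
  exact div_lt_div_of_pos_right (by nlinarith) hb1

lemma brk_nonneg (hb : 1 < b) (hT : 0 < T) (n : ℕ) : 0 ≤ brk b T n := by
  rw [← brk_zero (b := b) (T := T)]
  rcases Nat.eq_zero_or_pos n with h | h
  · simp [h]
  · exact (brk_strictMono hb hT h).le

lemma brk_succ (hb : 1 < b) (n : ℕ) :
    brk b T (n + 1) = brk b T n + T * Real.pi * b ^ n := by
  have hb1 : b - 1 ≠ 0 := sub_ne_zero.mpr (by linarith)
  unfold brk
  field_simp
  ring

lemma seg_eq (hb : 1 < b) (hT : 0 < T) {m : ℕ} {x : ℝ}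
    (h1 : brk b T m ≤ x) (h2 : x < brk b T (m + 1)) : seg b T x = m := by
  have hmem : m ∈ {n : ℕ | x < brk b T (n + 1)} := h2
  refine le_antisymm (Nat.sInf_le hmem) (le_csInf ⟨m, hmem⟩ ?_)
  intro k hk
  by_contra hkm
  push_neg at hkm
  have : brk b T (k + 1) ≤ brk b T m := (brk_strictMono hb hT).monotone (by omega)
  exact absurd (lt_of_lt_of_le hk this) (not_lt.mpr h1)

lemma satN_on_seg (hb : 1 < b) (hT : 0 < T) {m : ℕ} {x : ℝ}
    (h1 : brk b T m ≤ x) (h2 : x ≤ brk b T (m + 1)) :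
    satN a b T x = (-1 : ℝ) ^ m * a * Real.cos ((x - brk b T m) / (b ^ m * T)) := by
  have hx0 : 0 ≤ x := le_trans (brk_nonneg hb hT m) h1
  have hxabs : |x| = x := abs_of_nonneg hx0
  have hbm : (0:ℝ) < b ^ m := pow_pos (by linarith) m
  rcases lt_or_eq_of_le h2 with h2 | h2
  · rw [satN, hxabs, seg_eq hb hT h1 h2]
  · have hseg : seg b T x = m + 1 := by
      apply seg_eq hb hT (h2 ▸ le_refl x)
      rw [h2]
      exact brk_strictMono hb hT (by omega)
    rw [satN, hxabs, hseg, h2]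
    have e1 : (brk b T (m + 1) - brk b T m) / (b ^ m * T) = Real.pi := by
      rw [brk_succ hb]; field_simp; ring
    rw [e1, sub_self, zero_div, Real.cos_pi, Real.cos_zero]
    ring

lemma integral_on_seg (hb : 1 < b) (hT : 0 < T) {m : ℕ} {x : ℝ}
    (h1 : brk b T m ≤ x) (h2 : x ≤ brk b T (m + 1)) :
    ∫ τ in (brk b T m)..x, satN a b T τ
      = (-1 : ℝ) ^ m * a * (b ^ m * T) * Real.sin ((x - brk b T m) / (b ^ m * T)) := by
  have hbm : (0:ℝ) < b ^ m * T := by positivity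
  have hcong : ∫ τ in (brk b T m)..x, satN a b T τ
      = ∫ τ in (brk b T m)..x, (-1 : ℝ) ^ m * a * Real.cos ((τ - brk b T m) / (b ^ m * T)) := by
    apply intervalIntegral.integral_congr
    intro τ hτ
    rw [Set.uIcc_of_le h1] at hτ
    exact satN_on_seg hb hT hτ.1 (le_trans hτ.2 h2)
  rw [hcong, intervalIntegral.integral_const_mul]
  have : (∫ τ in (brk b T m)..x, Real.cos ((τ - brk b T m) / (b ^ m * T)))
      = ∫ τ in (brk b T m - brk b T m)..(x - brk b T m), Real.cos (τ / (b ^ m * T)) := by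
    exact intervalIntegral.integral_comp_sub_right (fun y => Real.cos (y / (b ^ m * T))) _
  rw [this, intervalIntegral.integral_comp_div (fun y => Real.cos y) (ne_of_gt hbm),
    integral_cos]
  rw [smul_eq_mul]
  rw [sub_self, zero_div, Real.sin_zero, sub_zero]
  ring

lemma integrable_on_seg (hb : 1 < b) (hT : 0 < T) {m : ℕ} {x : ℝ}
    (h1 : brk b T m ≤ x) (h2 : x ≤ brk b T (m + 1)) :
    IntervalIntegrable (satN a b T) MeasureTheory.volume (brk b T m) x := by
  have hc : Continuous fun τ : ℝ => (-1 : ℝ) ^ m * a * Real.cos ((τ - brk b T m) / (b ^ m * T)) := by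
    continuity
  apply (hc.intervalIntegrable (brk b T m) x).congr
  intro τ hτ
  rw [Set.uIoc_of_le h1] at hτ
  exact (satN_on_seg hb hT hτ.1.le (le_trans hτ.2 h2)).symm

lemma integrable_and_zero (ha : 0 < a) (hb : 1 < b) (hT : 0 < T) (m : ℕ) :
    IntervalIntegrable (satN a b T) MeasureTheory.volume 0 (brk b T m) ∧
      (∫ τ in (0:ℝ)..(brk b T m), satN a b T τ) = 0 := by
  induction m with
  | zero => simp [brk_zero]
  | succ m ih =>
    have hle : brk b T m ≤ brk b T (m + 1) := (brk_strictMono hb hT (by omega)).le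
    have hseg : IntervalIntegrable (satN a b T) MeasureTheory.volume (brk b T m) (brk b T (m+1)) :=
      integrable_on_seg hb hT hle le_rfl
    have hint : IntervalIntegrable (satN a b T) MeasureTheory.volume 0 (brk b T (m+1)) :=
      ih.1.trans hseg
    refine ⟨hint, ?_⟩
    rw [← intervalIntegral.integral_add_adjacent_intervals ih.1 hseg, ih.2,
      integral_on_seg hb hT hle le_rfl]
    have hbm : (0:ℝ) < b ^ m * T := by positivity
    have e1 : (brk b T (m+1) - brk b T m) / (b ^ m * T) = Real.pi := by
      rw [brk_succ hb]; field_simp; ring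
    rw [e1, Real.sin_pi]
    ring

/-- Value of G at midpoints. -/
lemma G_at_mid (ha : 0 < a) (hb : 1 < b) (hT : 0 < T) (m : ℕ) :
    (∫ τ in (0:ℝ)..(brk b T m + Real.pi / 2 * (b ^ m * T)), satN a b T τ)
      = (-1 : ℝ) ^ m * a * (b ^ m * T) := by
  set x := brk b T m + Real.pi / 2 * (b ^ m * T) with hx
  have hbm : (0:ℝ) < b ^ m * T := by positivity
  have hπ := Real.pi_pos
  have h1 : brk b T m ≤ x := by
    rw [hx]; nlinarith
  have h2 : x ≤ brk b T (m + 1) := by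
    rw [hx, brk_succ hb]; nlinarith
  have hseg := integrable_on_seg (a := a) hb hT h1 h2
  have h0 := integrable_and_zero ha hb hT m
  rw [← intervalIntegral.integral_add_adjacent_intervals h0.1 hseg, h0.2,
    integral_on_seg hb hT h1 h2]
  have e1 : (x - brk b T m) / (b ^ m * T) = Real.pi / 2 := by
    rw [hx]; field_simp; ring
  rw [e1, Real.sin_pi_div_two]
  ring

end lems

/-- quantitative Nussbaum property of the averaged integral. -/
theorem satN_averaged_property (a b T : ℝ) (ha : 0 < a) (hb : 1 < b) (hT : 0 < T) :
    2 * a * (b - 1) / (Real.pi * (b + 1)) ≤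
      Filter.limsup (fun χ : ℝ => (1 / χ) * ∫ τ in (0:ℝ)..χ, satN a b T τ) Filter.atTop ∧
    0 < 2 * a * (b - 1) / (Real.pi * (b + 1)) ∧
    Filter.liminf (fun χ : ℝ => (1 / χ) * ∫ τ in (0:ℝ)..χ, satN a b T τ) Filter.atTop ≤
      -(2 * a * (b - 1) / (Real.pi * (b + 1))) ∧
    -(2 * a * (b - 1) / (Real.pi * (b + 1))) < 0 := by
  have hπ := Real.pi_pos
  set C := 2 * a * (b - 1) / (Real.pi * (b + 1)) with hC
  set f : ℝ → ℝ := fun χ => (1 / χ) * ∫ τ in (0:ℝ)..χ, satN a b T τ with hf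
  have hCpos : 0 < C := by
    apply div_pos (by nlinarith) (by nlinarith)
  -- boundedness of f eventually
  have hbound : ∀ χ : ℝ, 0 < χ → |f χ| ≤ a := by
    intro χ hχ
    have hN : ∀ x ∈ Set.uIoc (0:ℝ) χ, ‖satN a b T x‖ ≤ a := by
      intro x _
      have : |satN a b T x| = a * |Real.cos ((|x| - brk b T (seg b T |x|)) / (b ^ (seg b T |x|) * T))| := by
        rw [satN, abs_mul, abs_mul, abs_pow, abs_neg, abs_one, one_pow, one_mul,
          abs_of_pos ha]
      rw [Real.norm_eq_abs, this]
      nlinarith [abs_cos_le_one ((|x| - brk b T (seg b T |x|)) / (b ^ (seg b T |x|) * T)),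
        abs_nonneg (Real.cos ((|x| - brk b T (seg b T |x|)) / (b ^ (seg b T |x|) * T)))]
    have := intervalIntegral.norm_integral_le_of_norm_le_const hN
    rw [Real.norm_eq_abs] at this
    have habs : |∫ τ in (0:ℝ)..χ, satN a b T τ| ≤ a * χ := by
      calc |∫ τ in (0:ℝ)..χ, satN a b T τ| ≤ a * |χ - 0| := this
        _ = a * χ := by rw [sub_zero, abs_of_pos hχ]
    rw [hf]
    have e : |1 / χ * ∫ τ in (0:ℝ)..χ, satN a b T τ|
        = (1 / χ) * |∫ τ in (0:ℝ)..χ, satN a b T τ| := by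
      rw [abs_mul, abs_of_pos (by positivity : (0:ℝ) < 1 / χ)]
    rw [e, one_div, inv_mul_le_iff₀ hχ, mul_comm χ a]
    exact habs
  have hBddAbove : Filter.IsBoundedUnder (· ≤ ·) Filter.atTop f := by
    refine ⟨a, Filter.eventually_map.2 ?_⟩
    filter_upwards [Filter.eventually_gt_atTop 0] with χ hχ
    exact le_of_abs_le (hbound χ hχ)
  have hBddBelow : Filter.IsBoundedUnder (· ≥ ·) Filter.atTop f := by
    refine ⟨-a, Filter.eventually_map.2 ?_⟩
    filter_upwards [Filter.eventually_gt_atTop 0] with χ hχ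
    exact neg_le_of_abs_le (hbound χ hχ)
  -- the midpoint sequence
  set x : ℕ → ℝ := fun m => brk b T m + Real.pi / 2 * (b ^ m * T) with hxdef
  have hxpos : ∀ m, 0 < x m := by
    intro m
    have hbm : (0:ℝ) < b ^ m * T := by positivity
    have := brk_nonneg (b := b) (T := T) hb hT m
    rw [hxdef]; dsimp; nlinarith
  have hfx : ∀ m : ℕ, f (x m) = (1 / x m) * ((-1 : ℝ) ^ m * a * (b ^ m * T)) := by
    intro m
    rw [hf]
    dsimp only
    rw [G_at_mid ha hb hT m]
  -- key inequality: a * b^m * T / x m > C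
  have hkey : ∀ m : ℕ, C ≤ (1 / x m) * (a * (b ^ m * T)) := by
    intro m
    have hbm : (0:ℝ) < b ^ m := pow_pos (by linarith) m
    have hbm1 : (1:ℝ) ≤ b ^ m := one_le_pow₀ (by linarith)
    have hxm := hxpos m
    have hb1 : (0:ℝ) < b - 1 := by linarith
    have hx : x m = (T * Real.pi * (b ^ m - 1)) / (b - 1) + Real.pi / 2 * (b ^ m * T) := rfl
    have hxval : x m * (b - 1) = T * Real.pi * (b ^ m - 1) + Real.pi / 2 * (b ^ m * T) * (b - 1) := by
      rw [hx]; field_simp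
    have h2 : (1 / x m) * (a * (b ^ m * T)) = (a * (b ^ m * T)) / x m := by ring
    rw [h2, hC, div_le_div_iff₀ (by positivity) hxm]
    calc 2 * a * (b - 1) * x m = 2 * a * (x m * (b - 1)) := by ring
      _ = 2 * a * (T * Real.pi * (b ^ m - 1) + Real.pi / 2 * (b ^ m * T) * (b - 1)) := by
          rw [hxval]
      _ ≤ a * (b ^ m * T) * (Real.pi * (b + 1)) := by
          nlinarith [mul_pos (mul_pos ha hT) hπ]
  -- x (2k) grows without bound, and similarly odd
  have hxbig : ∀ (N : ℝ) (p : ℕ), ∃ m : ℕ, p ≤ m ∧ N ≤ x m := by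
    intro N p
    obtain ⟨n, hn⟩ := pow_unbounded_of_one_lt (max N 0 / (Real.pi / 2 * T)) hb
    refine ⟨max n p, le_max_right _ _, ?_⟩
    have hbn : b ^ n ≤ b ^ (max n p) := pow_le_pow_right₀ (by linarith) (le_max_left _ _)
    have h2 : max N 0 < Real.pi / 2 * T * b ^ n := by
      rw [div_lt_iff₀ (by positivity)] at hn
      linarith
    have hbrk := brk_nonneg (b := b) (T := T) hb hT (max n p)
    have : N ≤ max N 0 := le_max_left _ _
    have h3 : Real.pi / 2 * T * b ^ n ≤ Real.pi / 2 * T * b ^ (max n p) :=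
      mul_le_mul_of_nonneg_left hbn (by positivity)
    rw [hxdef]; dsimp; nlinarith
  constructor
  · -- limsup
    apply Filter.le_limsup_of_frequently_le _ hBddAbove
    rw [Filter.frequently_atTop]
    intro N
    obtain ⟨m, hm1, hm2⟩ := hxbig N 0
    refine ⟨x (2 * m), ?_, ?_⟩
    · calc N ≤ x m := hm2
        _ ≤ x (2 * m) := by
          have h1 : brk b T m ≤ brk b T (2 * m) := (brk_strictMono hb hT).monotone (by omega)
          have h2 : b ^ m ≤ b ^ (2 * m) := pow_le_pow_right₀ (by linarith) (by omega)
          have h3 : Real.pi / 2 * T * b ^ m ≤ Real.pi / 2 * T * b ^ (2 * m) :=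
            mul_le_mul_of_nonneg_left h2 (by positivity)
          rw [hxdef]; dsimp; nlinarith
    · have hpow : ((-1 : ℝ)) ^ (2 * m) = 1 := by
        rw [pow_mul]; norm_num
      rw [hfx (2 * m), hpow, one_mul]
      exact hkey (2 * m)
  refine ⟨hCpos, ?_, by linarith⟩
  -- liminf
  apply Filter.liminf_le_of_frequently_le _ hBddBelow
  rw [Filter.frequently_atTop]
  intro N
  obtain ⟨m, hm1, hm2⟩ := hxbig N 0
  refine ⟨x (2 * m + 1), ?_, ?_⟩
  · calc N ≤ x m := hm2
      _ ≤ x (2 * m + 1) := by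
        have h1 : brk b T m ≤ brk b T (2 * m + 1) := (brk_strictMono hb hT).monotone (by omega)
        have h2 : b ^ m ≤ b ^ (2 * m + 1) := pow_le_pow_right₀ (by linarith) (by omega)
        have h3 : Real.pi / 2 * T * b ^ m ≤ Real.pi / 2 * T * b ^ (2 * m + 1) :=
          mul_le_mul_of_nonneg_left h2 (by positivity)
        rw [hxdef]; dsimp; nlinarith
  · have hpow : ((-1 : ℝ)) ^ (2 * m + 1) = -1 := by
      rw [pow_succ, pow_mul]; norm_num
    rw [hfx (2 * m + 1), hpow]
    have := hkey (2 * m + 1)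
    have hxm := hxpos (2 * m + 1)
    nlinarith [hkey (2 * m + 1)]
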